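/- Let D be a one-dimensional valuation domain, not a DVR, with quotient field K, additive valuation ω : K^× → ℝ, and value group G := ω(K^×) dense in ℝ. For a nonzero fractional ideal I of D, set φ(I) := sup{ω(x) : x ∈ K^×, I ⊆ xD} (a well-defined real number). Then for nonzero fractional ideals I, J of D, the following are equivalent: (i) φ(I) = φ(J); (ii) {xD : x ∈ K^×, I ⊆ xD} = {xD : x ∈ K^×, J ⊆ xD}; (iii) I^v = J^v. -/

import Mathlib

noncomputable section

/-- The `v`-operation `E ↦ (E⁻¹)⁻¹ = (D : (D : E))` on `D`-submodules of `K`. -/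
def vOp (D K : Type*) [CommRing D] [Field K] [Algebra D K] (E : Submodule D K) :
    Submodule D K :=
  (1 : Submodule D K) / ((1 : Submodule D K) / E)

/-- `φ(I) := sup {ω(x) : x ∈ K^×, I ⊆ xD}`. -/
def phiVal (D K : Type*) [CommRing D] [Field K] [Algebra D K] (ω : K → ℝ)
    (I : Submodule D K) : ℝ :=
  sSup {r : ℝ | ∃ x : K, x ≠ 0 ∧ I ≤ Submodule.span D {x} ∧ ω x = r}

/-- Auxiliary: the set of values of nonzero elements of a submodule. -/
def valSet (D K : Type*) [CommRing D] [Field K] [Algebra D K] (ω : K → ℝ)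
    (I : Submodule D K) : Set ℝ :=
  {r : ℝ | ∃ y ∈ I, y ≠ 0 ∧ ω y = r}

/-- Auxiliary: `m(I) = inf {ω(y) : 0 ≠ y ∈ I}`. -/
def mval (D K : Type*) [CommRing D] [Field K] [Algebra D K] (ω : K → ℝ)
    (I : Submodule D K) : ℝ :=
  sInf (valSet D K ω I)

/-- **Lemma 2.9.** Let `D` be a one-dimensional valuation domain, not a DVR, with quotient
field `K`, valuation `ω : K^× → ℝ` and value group `G = ω(K^×)` dense in `ℝ`.  For nonzero
fractional ideals `I, J` of `D`, TFAE:
(i) `φ(I) = φ(J)`;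
(ii) `{xD : I ⊆ xD} = {xD : J ⊆ xD}`;
(iii) `Iᵛ = Jᵛ`. -/
theorem phiVal_eq_iff_v_eq
    (D K : Type*) [CommRing D] [IsDomain D] [Field K] [Algebra D K] [IsFractionRing D K]
    (ω : K → ℝ)
    (hhom : ∀ x y : K, x ≠ 0 → y ≠ 0 → ω (x * y) = ω x + ω y)
    (hmin : ∀ x y : K, x ≠ 0 → y ≠ 0 → x + y ≠ 0 → min (ω x) (ω y) ≤ ω (x + y))
    -- `D = {x ∈ K : x = 0 ∨ ω(x) ≥ 0}`:
    (hD : ∀ x : K, (∃ d : D, algebraMap D K d = x) ↔ x = 0 ∨ 0 ≤ ω x)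
    -- `D` is not a DVR, i.e. the value group `G = ω(K^×)` is dense in `ℝ`:
    (hnotdvr : ¬ IsDiscreteValuationRing D)
    (hdense : ∀ a b : ℝ, a < b → ∃ x : K, x ≠ 0 ∧ a < ω x ∧ ω x < b) :
    ∀ I J : Submodule D K,
      I ≠ ⊥ → IsFractional (nonZeroDivisors D) I →
      J ≠ ⊥ → IsFractional (nonZeroDivisors D) J →
      List.TFAE
        [phiVal D K ω I = phiVal D K ω J,
         ∀ x : K, x ≠ 0 → (I ≤ Submodule.span D {x} ↔ J ≤ Submodule.span D {x}),
         vOp D K I = vOp D K J] := by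
  have hω1 : ω 1 = 0 := by
    have h := hhom 1 1 one_ne_zero one_ne_zero
    simp only [mul_one] at h
    linarith
  -- membership in `span D {x}` in terms of values
  have hspan : ∀ x y : K, x ≠ 0 → (y ∈ Submodule.span D {x} ↔ y = 0 ∨ ω x ≤ ω y) := by
    intro x y hx
    rw [Submodule.mem_span_singleton]
    constructor
    · rintro ⟨a, rfl⟩
      rcases eq_or_ne ((algebraMap D K) a) 0 with h0 | h0
      · left; rw [Algebra.smul_def, h0, zero_mul]
      · right
        rw [Algebra.smul_def, hhom _ _ h0 hx]
        have h1 : 0 ≤ ω ((algebraMap D K) a) := by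
          rcases (hD ((algebraMap D K) a)).mp ⟨a, rfl⟩ with h | h
          · exact absurd h h0
          · exact h
        linarith
    · intro h
      rcases eq_or_ne y 0 with rfl | hy0
      · exact ⟨0, by simp⟩
      · rcases h with rfl | hle
        · exact absurd rfl hy0
        · have hne : y * x⁻¹ ≠ 0 := mul_ne_zero hy0 (inv_ne_zero hx)
          have hval : 0 ≤ ω (y * x⁻¹) := by
            rw [hhom y x⁻¹ hy0 (inv_ne_zero hx)]
            have hxinv : ω x⁻¹ = -ω x := by
              have h2 := hhom x x⁻¹ hx (inv_ne_zero hx)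
              rw [mul_inv_cancel₀ hx, hω1] at h2
              linarith
            rw [hxinv]; linarith
          obtain ⟨a, ha⟩ := (hD (y * x⁻¹)).mpr (Or.inr hval)
          refine ⟨a, ?_⟩
          rw [Algebra.smul_def, ha]
          field_simp
  -- nonemptiness and boundedness of the value set
  have hSne : ∀ I : Submodule D K, I ≠ ⊥ → (valSet D K ω I).Nonempty := by
    intro I hI
    obtain ⟨y, hyI, hy0⟩ := Submodule.exists_mem_ne_zero_of_ne_bot hI
    exact ⟨ω y, y, hyI, hy0, rfl⟩
  have hSbdd : ∀ I : Submodule D K, IsFractional (nonZeroDivisors D) I →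
      BddBelow (valSet D K ω I) := by
    intro I hIf
    obtain ⟨d, hdS, hd⟩ := hIf
    have hd0 : (algebraMap D K) d ≠ 0 := by
      simp only [ne_eq, map_eq_zero_iff _ (IsFractionRing.injective D K)]
      exact nonZeroDivisors.ne_zero hdS
    refine ⟨-ω ((algebraMap D K) d), ?_⟩
    rintro r ⟨y, hyI, hy0, rfl⟩
    obtain ⟨c, hc⟩ := hd y hyI
    have hdy : (algebraMap D K) d * y ≠ 0 := mul_ne_zero hd0 hy0
    have h1 : 0 ≤ ω ((algebraMap D K) d * y) := by
      rcases (hD ((algebraMap D K) d * y)).mp ⟨c, by rwa [Algebra.smul_def] at hc⟩ with h | h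
      · exact absurd h hdy
      · exact h
    rw [hhom _ _ hd0 hy0] at h1
    linarith
  -- `I ≤ xD ↔ ω x ≤ m(I)`
  have hle_span : ∀ I : Submodule D K, I ≠ ⊥ → IsFractional (nonZeroDivisors D) I →
      ∀ x : K, x ≠ 0 → (I ≤ Submodule.span D {x} ↔ ω x ≤ mval D K ω I) := by
    intro I hI hIf x hx
    rw [mval, le_csInf_iff (hSbdd I hIf) (hSne I hI)]
    constructor
    · rintro h r ⟨y, hyI, hy0, rfl⟩
      rcases (hspan x y hx).mp (h hyI) with rfl | hle
      · exact absurd rfl hy0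
      · exact hle
    · intro h y hyI
      rw [hspan x y hx]
      rcases eq_or_ne y 0 with rfl | hy0
      · exact Or.inl rfl
      · exact Or.inr (h (ω y) ⟨y, hyI, hy0, rfl⟩)
  -- `φ(I) = m(I)`
  have hphi : ∀ I : Submodule D K, I ≠ ⊥ → IsFractional (nonZeroDivisors D) I →
      phiVal D K ω I = mval D K ω I := by
    intro I hI hIf
    have hTeq : {r : ℝ | ∃ x : K, x ≠ 0 ∧ I ≤ Submodule.span D {x} ∧ ω x = r}
        = {r : ℝ | ∃ x : K, x ≠ 0 ∧ ω x ≤ mval D K ω I ∧ ω x = r} := by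
      ext r
      constructor
      · rintro ⟨x, hx, hle, rfl⟩
        exact ⟨x, hx, (hle_span I hI hIf x hx).mp hle, rfl⟩
      · rintro ⟨x, hx, hle, rfl⟩
        exact ⟨x, hx, (hle_span I hI hIf x hx).mpr hle, rfl⟩
    rw [phiVal, hTeq]
    have hTne : {r : ℝ | ∃ x : K, x ≠ 0 ∧ ω x ≤ mval D K ω I ∧ ω x = r}.Nonempty := by
      obtain ⟨x, hx0, _, h2⟩ := hdense (mval D K ω I - 1) (mval D K ω I) (by linarith)
      exact ⟨ω x, x, hx0, h2.le, rfl⟩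
    have hTbdd : BddAbove {r : ℝ | ∃ x : K, x ≠ 0 ∧ ω x ≤ mval D K ω I ∧ ω x = r} := by
      refine ⟨mval D K ω I, ?_⟩
      rintro r ⟨x, hx, hle, rfl⟩; exact hle
    apply le_antisymm
    · apply csSup_le hTne
      rintro r ⟨x, hx, hle, rfl⟩; exact hle
    · by_contra h
      push_neg at h
      obtain ⟨x, hx0, h1, h2⟩ := hdense _ _ h
      have := le_csSup hTbdd (⟨x, hx0, h2.le, rfl⟩ :
        ω x ∈ {r : ℝ | ∃ x : K, x ≠ 0 ∧ ω x ≤ mval D K ω I ∧ ω x = r})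
      linarith
  -- characterization of `(1 : Submodule D K) / I`
  have hdivchar : ∀ I : Submodule D K, I ≠ ⊥ → IsFractional (nonZeroDivisors D) I →
      ∀ w : K, (w ∈ (1 : Submodule D K) / I ↔ w = 0 ∨ -ω w ≤ mval D K ω I) := by
    intro I hI hIf w
    rw [Submodule.mem_div_iff_forall_mul_mem]
    constructor
    · intro h
      rcases eq_or_ne w 0 with rfl | hw0
      · exact Or.inl rfl
      · refine Or.inr (le_csInf (hSne I hI) ?_)
        rintro r ⟨y, hyI, hy0, rfl⟩
        have hwy : w * y ≠ 0 := mul_ne_zero hw0 hy0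
        obtain ⟨c, hc⟩ := Submodule.mem_one.mp (h y hyI)
        have h1 : 0 ≤ ω (w * y) := by
          rcases (hD (w * y)).mp ⟨c, hc⟩ with h' | h'
          · exact absurd h' hwy
          · exact h'
        rw [hhom _ _ hw0 hy0] at h1
        linarith
    · intro h y hyI
      rcases eq_or_ne w 0 with rfl | hw0
      · rw [zero_mul]; exact zero_mem _
      rcases eq_or_ne y 0 with rfl | hy0
      · rw [mul_zero]; exact zero_mem _
      rcases h with rfl | hle
      · exact absurd rfl hw0
      have hmy : mval D K ω I ≤ ω y := csInf_le (hSbdd I hIf) ⟨y, hyI, hy0, rfl⟩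
      have : 0 ≤ ω (w * y) := by rw [hhom _ _ hw0 hy0]; linarith
      obtain ⟨c, hc⟩ := (hD (w * y)).mpr (Or.inr this)
      exact Submodule.mem_one.mpr ⟨c, hc⟩
  -- characterization of `vOp`
  have hvop : ∀ I : Submodule D K, I ≠ ⊥ → IsFractional (nonZeroDivisors D) I →
      ∀ z : K, (z ∈ vOp D K I ↔ z = 0 ∨ mval D K ω I ≤ ω z) := by
    intro I hI hIf z
    rw [vOp, Submodule.mem_div_iff_forall_mul_mem]
    constructor
    · intro h
      rcases eq_or_ne z 0 with rfl | hz0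
      · exact Or.inl rfl
      refine Or.inr ?_
      by_contra hlt
      push_neg at hlt
      obtain ⟨w, hw0, hw1, hw2⟩ := hdense (-mval D K ω I) (-ω z) (by linarith)
      have hwmem : w ∈ (1 : Submodule D K) / I :=
        (hdivchar I hI hIf w).mpr (Or.inr (by linarith))
      have hzw : z * w ≠ 0 := mul_ne_zero hz0 hw0
      obtain ⟨c, hc⟩ := Submodule.mem_one.mp (h w hwmem)
      have h1 : 0 ≤ ω (z * w) := by
        rcases (hD (z * w)).mp ⟨c, hc⟩ with h' | h'
        · exact absurd h' hzw
        · exact h'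
      rw [hhom _ _ hz0 hw0] at h1
      linarith
    · intro h w hw
      rcases eq_or_ne z 0 with rfl | hz0
      · rw [zero_mul]; exact zero_mem _
      rcases eq_or_ne w 0 with rfl | hw0
      · rw [mul_zero]; exact zero_mem _
      rcases h with rfl | hle
      · exact absurd rfl hz0
      rcases (hdivchar I hI hIf w).mp hw with rfl | hwle
      · exact absurd rfl hw0
      have : 0 ≤ ω (z * w) := by rw [hhom _ _ hz0 hw0]; linarith
      obtain ⟨c, hc⟩ := (hD (z * w)).mpr (Or.inr this)
      exact Submodule.mem_one.mpr ⟨c, hc⟩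
  -- main argument
  intro I J hI hIf hJ hJf
  have e1 : (phiVal D K ω I = phiVal D K ω J) ↔ mval D K ω I = mval D K ω J := by
    rw [hphi I hI hIf, hphi J hJ hJf]
  have e2 : (∀ x : K, x ≠ 0 → (I ≤ Submodule.span D {x} ↔ J ≤ Submodule.span D {x}))
      ↔ mval D K ω I = mval D K ω J := by
    constructor
    · intro h
      by_contra hne
      rcases lt_or_gt_of_ne hne with hlt | hlt
      · obtain ⟨x, hx0, h1, h2⟩ := hdense _ _ hlt
        have h3 := (h x hx0).mpr ((hle_span J hJ hJf x hx0).mpr h2.le)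
        rw [hle_span I hI hIf x hx0] at h3
        linarith
      · obtain ⟨x, hx0, h1, h2⟩ := hdense _ _ hlt
        have h3 := (h x hx0).mp ((hle_span I hI hIf x hx0).mpr h2.le)
        rw [hle_span J hJ hJf x hx0] at h3
        linarith
    · intro h x hx0
      rw [hle_span I hI hIf x hx0, hle_span J hJ hJf x hx0, h]
  have e3 : (vOp D K I = vOp D K J) ↔ mval D K ω I = mval D K ω J := by
    constructor
    · intro h
      by_contra hne
      rcases lt_or_gt_of_ne hne with hlt | hlt
      · obtain ⟨z, hz0, h1, h2⟩ := hdense _ _ hlt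
        have h3 : z ∈ vOp D K I := (hvop I hI hIf z).mpr (Or.inr h1.le)
        rw [h, hvop J hJ hJf z] at h3
        rcases h3 with rfl | h3
        · exact hz0 rfl
        · linarith
      · obtain ⟨z, hz0, h1, h2⟩ := hdense _ _ hlt
        have h3 : z ∈ vOp D K J := (hvop J hJ hJf z).mpr (Or.inr h1.le)
        rw [← h, hvop I hI hIf z] at h3
        rcases h3 with rfl | h3
        · exact hz0 rfl
        · linarith
    · intro h
      ext z
      rw [hvop I hI hIf z, hvop J hJ hJf z, h]
  tfae_have 1 ↔ 2 := e1.trans e2.symm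
  tfae_have 2 ↔ 3 := e2.trans e3.symm
  tfae_finish
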